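/- Let 0 ≤ r ≤ N. For 0 ≤ k ≤ N−r, let Z_{N−k,r} = Σ_σ R(σ), the sum over all words σ ∈ {−1,0,1}^{N−k} with exactly r zeros, and set Z̃_{N−k,r} = ((t−1)^{N−k−r} / Π_{i=2r}^{N−k+r−1}(αβ t^i − γδ)) · Z_{N−k,r}. Then Σ_μ F_μ(z; t) = Σ_{k=0}^{N−r} Z̃_{N−k,r} · e_k(y_1, …, y_N), where the left-hand sum is over all words μ ∈ {−1,0,1}^N with exactly r zeros (i.e. all distinct signed permutations of (1^{N−r}, 0^r)), e_k denotes the elementary symmetric polynomial of degree k, and y_i = z_i + z_i^{−1} − 2 for 1 ≤ i ≤ N. (This sum equals the Koornwinder polynomial K_{(1^{N−r},0^r)}(z; a,b,c,d; q,t) under the standard change of variables.) -/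

import Mathlib

open scoped BigOperators
open Finset

noncomputable section

namespace RST

/-! ## Rhombic staircase tableaux -/

/-- The four Greek letters `α, β, γ, δ` used to fill tableaux. -/
inductive Greek : Type
  | A | B | G | D
  deriving DecidableEq

instance : Fintype Greek :=
  ⟨{Greek.A, Greek.B, Greek.G, Greek.D}, by intro x; cases x <;> simp⟩

/-- The number of `0`'s (i.e. `∗`'s) in a word. -/
def nzeros (w : List ℤ) : ℕ := w.count 0

/-- `‖w‖ = length + number of zeros`. -/
def nn (w : List ℤ) : ℕ := w.length + nzeros w

/-- The tiles of the rhombic diagram `Γ(w)` (with its distinguished tiling) are indexed by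
pairs `i ≤ j` such that not both `w_i = 0` and `w_j = 0`.  The tile `(i,j)` is a square if
`w_i ≠ 0 ≠ w_j`, a vertical rhombus if `w_i ≠ 0 = w_j`, and a horizontal rhombus if
`w_i = 0 ≠ w_j`.  Tile `(i,j)` lies in the west-strip (row) of the border tile `i` and in the
north-strip (column) of the border tile `j`; the border tile `j` itself is the tile `(j,j)`
when `w_j ≠ 0`. -/
def IsTile (w : List ℤ) (i j : Fin w.length) : Prop :=
  i ≤ j ∧ ¬(w.get i = 0 ∧ w.get j = 0)

/-- `ColAbove w i' i` says that a tile `(i',j)` lies strictly above the tile `(i,j)` in the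
north-strip of the column `j` (in the distinguished tiling, a north-strip consists of its
squares, ordered bottom-to-top by decreasing row index, followed by its horizontal rhombi,
ordered bottom-to-top by decreasing row index). -/
def ColAbove (w : List ℤ) (i' i : Fin w.length) : Prop :=
  (w.get i' = 0 ∧ w.get i ≠ 0) ∨
    (w.get i' = 0 ∧ w.get i = 0 ∧ i' < i) ∨
    (w.get i' ≠ 0 ∧ w.get i ≠ 0 ∧ i' < i)

/-- A filling of the tiles of `Γ(w)` by Greek letters (`none` = empty tile). -/
abbrev Filling (w : List ℤ) : Type := Fin w.length → Fin w.length → Option Greek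

/-- The defining conditions for a rhombic staircase tableau of type `w`. -/
def IsRST (w : List ℤ) (f : Filling w) : Prop :=
  (∀ i j, ¬ IsTile w i j → f i j = none) ∧
  (∀ j, w.get j = -1 → (f j j = some Greek.B ∨ f j j = some Greek.G)) ∧
  (∀ j, w.get j = 1 → (f j j = some Greek.A ∨ f j j = some Greek.D)) ∧
  (∀ i j, w.get j = 0 → (f i j = none ∨ f i j = some Greek.B ∨ f i j = some Greek.D)) ∧
  (∀ i j, w.get i = 0 → (f i j = none ∨ f i j = some Greek.A ∨ f i j = some Greek.G)) ∧
  (∀ i j i', (f i j = some Greek.A ∨ f i j = some Greek.G) →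
      IsTile w i' j → ColAbove w i' i → f i' j = none) ∧
  (∀ i j j', (f i j = some Greek.B ∨ f i j = some Greek.D) →
      j < j' → IsTile w i j' → f i j' = none)

/-- The nearest nonempty tile to the right of `(i,j)` in its west-strip contains `g`. -/
def SeesRight (w : List ℤ) (f : Filling w) (i j : Fin w.length) (g : Greek) : Prop :=
  ∃ j' : Fin w.length, i ≤ j' ∧ j' < j ∧ f i j' = some g ∧
    ∀ j'' : Fin w.length, j' < j'' → j'' < j → f i j'' = none

/-- The nearest nonempty tile below `(i,j)` in its north-strip contains `g`. -/
def SeesBelow (w : List ℤ) (f : Filling w) (i j : Fin w.length) (g : Greek) : Prop :=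
  ∃ i' : Fin w.length, IsTile w i' j ∧ ColAbove w i i' ∧ f i' j = some g ∧
    ∀ i'' : Fin w.length, IsTile w i'' j → ColAbove w i i'' → ColAbove w i'' i' → f i'' j = none

variable {R : Type*} [CommRing R]

open Classical in
/-- The weight of the tile `(i,j)` in the filling `f` (the Greek letter it contains, if any,
times the appropriate power of `t`). -/
def tileWt (pa pb pg pd pt : R) (w : List ℤ) (f : Filling w) (i j : Fin w.length) : R :=
  if ¬ IsTile w i j then 1
  else
    match f i j with
    | some Greek.A => pa * (if w.get i = 0 then pt else 1)
    | some Greek.B => pb * (if w.get j = 0 then pt else 1)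
    | some Greek.G => pg
    | some Greek.D => pd
    | none =>
      if w.get i ≠ 0 ∧ w.get j = 0 then
        -- empty vertical rhombus
        (if SeesRight w f i j Greek.B then pt ^ 2
         else if SeesRight w f i j Greek.A ∨ SeesRight w f i j Greek.G then pt else 1)
      else if w.get i = 0 ∧ w.get j ≠ 0 then
        -- empty horizontal rhombus
        (if SeesBelow w f i j Greek.A then pt ^ 2
         else if SeesBelow w f i j Greek.B ∨ SeesBelow w f i j Greek.D then pt else 1)
      else
        -- empty square
        (if SeesRight w f i j Greek.B ∨
            ((SeesRight w f i j Greek.A ∨ SeesRight w f i j Greek.G) ∧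
              (SeesBelow w f i j Greek.A ∨ SeesBelow w f i j Greek.D)) then pt else 1)

/-- The weight `wt(T)` of a filling: the product of the weights of all its tiles. -/
def wt (pa pb pg pd pt : R) (w : List ℤ) (f : Filling w) : R :=
  ∏ i : Fin w.length, ∏ j : Fin w.length, tileWt pa pb pg pd pt w f i j

open Classical in
/-- `R(w)`: the generating polynomial of all rhombic staircase tableaux of type `w`. -/
def RR (pa pb pg pd pt : R) (w : List ℤ) : R :=
  ∑ f ∈ Finset.univ.filter (IsRST w), wt pa pb pg pd pt w f

/-- `λ_M = αβt^{M-1} - γδ`. -/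
def lamM (pa pb pg pd pt : R) (M : ℕ) : R := pa * pb * pt ^ (M - 1) - pg * pd

variable {K : Type*} [Field K]

/-- The normalized generating function
`R̃(w) = (t-1)^{N-r} / ∏_{i=2r}^{N+r-1} (αβt^i - γδ) · R(w)`. -/
def Rt (pa pb pg pd pt : K) (w : List ℤ) : K :=
  ((pt - 1) ^ (w.length - nzeros w) /
      ∏ i ∈ Finset.Ico (2 * nzeros w) (w.length + nzeros w), (pa * pb * pt ^ i - pg * pd)) *
    RR pa pb pg pd pt w

/-! ## The ring of Laurent polynomials in `z_1, …, z_N` -/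

/-- The ring `L = K[z_1^{±1}, …, z_N^{±1}]` of Laurent polynomials in `N` variables. -/
abbrev Lp (K : Type*) [Field K] (N : ℕ) : Type _ := AddMonoidAlgebra K (Fin N → ℤ)

variable {N : ℕ}

/-- The constant `c` as a Laurent polynomial. -/
def CC (c : K) : Lp K N := AddMonoidAlgebra.single 0 c

/-- The variable `z_j`. -/
def Z (j : Fin N) : Lp K N := AddMonoidAlgebra.single (Pi.single j 1) 1

/-- The inverse variable `z_j⁻¹`. -/
def Zinv (j : Fin N) : Lp K N := AddMonoidAlgebra.single (Pi.single j (-1)) 1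

/-- The coefficient of the Laurent monomial `z^m` in `f`. -/
def coeff (f : Lp K N) (m : Fin N → ℤ) : K := AddMonoidAlgebra.coeff f m

/-- `f` does not involve the variable `z_v`. -/
def IndepVar (f : Lp K N) (v : Fin N) : Prop :=
  ∀ m : Fin N → ℤ, coeff f m ≠ 0 → m v = 0

/-- `(z^m - s_{uv} z^m)/(z_u - z_v)` as a Laurent polynomial, where `s_{uv}` exchanges the
variables `z_u, z_v`:  for `p = m u ≥ r = m v` this is `∑_{k=0}^{p-r-1} z_u^{r+k} z_v^{p-1-k}`
(times the other variables), and for `p < r` it is `-∑_{k=0}^{r-p-1} z_u^{p+k} z_v^{r-1-k}`. -/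
def ddMono (u v : Fin N) (m : Fin N → ℤ) : Lp K N :=
  if m v ≤ m u then
    ∑ k ∈ Finset.range (m u - m v).toNat,
      AddMonoidAlgebra.single
        (Function.update (Function.update m u (m v + (k : ℤ))) v (m u - 1 - (k : ℤ))) (1 : K)
  else
    - ∑ k ∈ Finset.range (m v - m u).toNat,
      AddMonoidAlgebra.single
        (Function.update (Function.update m u (m u + (k : ℤ))) v (m v - 1 - (k : ℤ))) (1 : K)

/-- The divided difference `f ↦ (f - s_{uv} f)/(z_u - z_v)`. -/
def ddPair (u v : Fin N) (f : Lp K N) : Lp K N :=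
  Finsupp.sum (AddMonoidAlgebra.coeff f) fun m c => CC c * ddMono u v m

/-- Noumi's operator `T̃ = t - (t z_u - z_v) (1 - s_{uv})/(z_u - z_v)` on Laurent polynomials;
for `u, v` the positions of `z_i, z_{i+1}` this is the operator `T̃_i`, `1 ≤ i ≤ N-1`. -/
def Tmid (t : K) (u v : Fin N) (f : Lp K N) : Lp K N :=
  CC t * f - (CC t * Z u - Z v) * ddPair u v f

/-- `(z^m - s₀ z^m)/(z_v - q z_v⁻¹)` as a Laurent polynomial, where `s₀` maps `z_v ↦ q z_v⁻¹`:
for `p = m v ≥ 0` this is `∑_{k=0}^{p-1} q^k z_v^{p-1-2k}` (times the other variables), and for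
`p < 0` it is `-∑_{k=0}^{-p-1} q^{p+k} z_v^{p+1+2k}`. -/
def dd0Mono (q : K) (v : Fin N) (m : Fin N → ℤ) : Lp K N :=
  if 0 ≤ m v then
    ∑ k ∈ Finset.range (m v).toNat,
      AddMonoidAlgebra.single (Function.update m v (m v - 1 - 2 * (k : ℤ))) (q ^ (k : ℕ))
  else
    - ∑ k ∈ Finset.range (-(m v)).toNat,
      AddMonoidAlgebra.single (Function.update m v (m v + 1 + 2 * (k : ℤ))) (q ^ (m v + (k : ℤ)))

/-- The divided difference `f ↦ (f - s₀ f)/(z_v - q z_v⁻¹)`. -/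
def dd0 (q : K) (v : Fin N) (f : Lp K N) : Lp K N :=
  Finsupp.sum (AddMonoidAlgebra.coeff f) fun m c => CC c * dd0Mono q v m

/-- Noumi's operator `T̃₀ = -ac/q - (z₁-a)(z₁-c)/z₁ · (1-s₀)/(z₁ - q z₁⁻¹)`, acting on the
variable `z_v` (with `v` the position of `z₁`); here
`-(z-a)(z-c)/z = -z + (a+c) - ac z⁻¹`. -/
def T0 (a c q : K) (v : Fin N) (f : Lp K N) : Lp K N :=
  CC (-(a * c) / q) * f + (CC (a + c) - Z v - CC (a * c) * Zinv v) * dd0 q v f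

/-- Noumi's operator `T̃_N = -bd + (bz-1)(dz-1)/z · (1-s_N)/(z - z⁻¹)`, acting on the variable
`z_v` (with `v` the position of `z_N`); here `(bz-1)(dz-1)/z = bd z - (b+d) + z⁻¹`, and
`(1 - s_N)/(z - z⁻¹)` is `dd0` with `q = 1`. -/
def TN (b d : K) (v : Fin N) (f : Lp K N) : Lp K N :=
  CC (-(b * d)) * f + (CC (b * d) * Z v - CC (b + d) + Zinv v) * dd0 1 v f

/-- The operator `T̃_j` for `0 ≤ j ≤ N` (`T̃₀`, `T̃_j` with `1 ≤ j ≤ N-1`, or `T̃_N`);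
the identity for `j` out of range. -/
def TT (a b c d q t : K) (N : ℕ) (j : ℕ) : Lp K N → Lp K N :=
  if h0 : j = 0 then (if hN : 0 < N then T0 a c q ⟨0, hN⟩ else id)
  else if hj : j < N then Tmid t ⟨j - 1, by omega⟩ ⟨j, hj⟩
  else if j = N then (if hN : 0 < N then TN b d ⟨N - 1, by omega⟩ else id)
  else id

/-- The Hecke parameter `t_j` (`t₀ = -ac/q`, `t_N = -bd`, `t_j = t` otherwise). -/
def tpar (a b c d q t : K) (N : ℕ) (j : ℕ) : K :=
  if j = 0 then -(a * c) / q else if j = N then -(b * d) else t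

/-- The inverse operator `T̃_j⁻¹ = t_j⁻¹ (T̃_j + (1 - t_j))`. -/
def TTinv (a b c d q t : K) (N : ℕ) (j : ℕ) (f : Lp K N) : Lp K N :=
  CC (tpar a b c d q t N j)⁻¹ * (TT a b c d q t N j f + CC (1 - tpar a b c d q t N j) * f)

/-- Composition of a list of operators (leftmost applied last). -/
def opProd (l : List (Lp K N → Lp K N)) : Lp K N → Lp K N := l.foldr (· ∘ ·) id

/-- The Cherednik operator
`Y_i = (T̃_i T̃_{i+1} ⋯ T̃_{N-1})(T̃_N T̃_{N-1} ⋯ T̃_1 T̃_0)(T̃₁⁻¹ T̃₂⁻¹ ⋯ T̃_{i-1}⁻¹)`. -/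
def Yop (a b c d q t : K) (N : ℕ) (i : ℕ) : Lp K N → Lp K N :=
  opProd (((List.range' i (N - i)).map (TT a b c d q t N)) ++
    (((List.range (N + 1)).reverse).map (TT a b c d q t N)) ++
    ((List.range' 1 (i - 1)).map (TTinv a b c d q t N)))

/-- Exchange of the variables `z_u` and `z_v`. -/
def swapVars (u v : Fin N) (f : Lp K N) : Lp K N :=
  Finsupp.sum (AddMonoidAlgebra.coeff f) fun m c => AddMonoidAlgebra.single (m ∘ (Equiv.swap u v)) c

/-! ## The open boundary ASEP polynomials `F_μ` -/

/-- The word `μ|_{S̄}` obtained from `μ` by deleting the entries in positions of `S`. -/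
def wordOf (N : ℕ) (mu : Fin N → ℤ) (S : Finset (Fin N)) : List ℤ :=
  ((List.finRange N).filter (fun k => decide (k ∉ S))).map mu

/-- The open boundary ASEP polynomial
`F_μ(z;t) = ∑_{S ⊆ V} R̃(μ|_{S̄}) ∏_{i ∈ S} (z_i^{μ_i} - 1)` where `V = {i : μ_i ≠ 0}`. -/
def FF (pa pb pg pd pt : K) (N : ℕ) (mu : Fin N → ℤ) : Lp K N :=
  ∑ S ∈ (Finset.univ.filter fun k => mu k ≠ 0).powerset,
    CC (Rt pa pb pg pd pt (wordOf N mu S)) *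
      ∏ i ∈ S, (AddMonoidAlgebra.single (Pi.single i (mu i)) (1 : K) - 1)

/-- `μ` is a signed permutation of `λ`. -/
def IsSignedPerm (lam mu : Fin N → ℤ) : Prop :=
  ∃ σ : Equiv.Perm (Fin N), ∀ i, mu i = lam (σ i) ∨ mu i = -lam (σ i)

/-- The word `δ = ((-1)^{N-r}, 0^r)`. -/
def deltaWord (N r : ℕ) : Fin N → ℤ := fun k => if (k : ℕ) < N - r then -1 else 0

/-! ## Generic parameter fields -/

/-- The field `ℚ(a,b,c,d,q,t)` of rational functions in six parameters. -/
abbrev K6 : Type := FractionRing (MvPolynomial (Fin 6) ℚ)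

/-- The generators of `K6`. -/
def gen6 (k : Fin 6) : K6 := algebraMap (MvPolynomial (Fin 6) ℚ) K6 (MvPolynomial.X k)

/-- The parameters `a, b, c, d, q, t` in `ℚ(a,b,c,d,q,t)`. -/
def pA : K6 := gen6 0
def pB : K6 := gen6 1
def pC : K6 := gen6 2
def pD : K6 := gen6 3
def pQ : K6 := gen6 4
def pT : K6 := gen6 5

/-- The change of variables `α = -ac(1-t)/((a-1)(c-1))`. -/
def chA : K6 := -(pA * pC) * (1 - pT) / ((pA - 1) * (pC - 1))
/-- The change of variables `γ = (1-t)/((a-1)(c-1))`. -/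
def chG : K6 := (1 - pT) / ((pA - 1) * (pC - 1))
/-- The change of variables `β = -bd(1-t)/((b-1)(d-1))`. -/
def chB : K6 := -(pB * pD) * (1 - pT) / ((pB - 1) * (pD - 1))
/-- The change of variables `δ = (1-t)/((b-1)(d-1))`. -/
def chD : K6 := (1 - pT) / ((pB - 1) * (pD - 1))

/-- The field `ℚ(α,β,γ,δ,t)` of rational functions in five parameters. -/
abbrev K5 : Type := FractionRing (MvPolynomial (Fin 5) ℚ)

/-- The generators of `K5`. -/
def gen5 (k : Fin 5) : K5 := algebraMap (MvPolynomial (Fin 5) ℚ) K5 (MvPolynomial.X k)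

/-- The parameters `α, β, γ, δ, t` in `ℚ(α,β,γ,δ,t)`. -/
def vA : K5 := gen5 0
def vB : K5 := gen5 1
def vG : K5 := gen5 2
def vD : K5 := gen5 3
def vT : K5 := gen5 4

/-- Words of length `N` with entries in `{-1,0,1}` having exactly `r` zeros, as a finite set
of functions `Fin N → ℤ`. -/
def WordsF (N r : ℕ) : Finset (Fin N → ℤ) :=
  (Finset.univ.image fun g : Fin N → Fin 3 => fun k => ((g k : ℤ) - 1)).filter
    fun mu => (Finset.univ.filter fun k => mu k = 0).card = r

/-- `R(μ)` for a word given as a function `Fin N → ℤ`. -/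
def RRw (pa pb pg pd pt : R) (N : ℕ) (mu : Fin N → ℤ) : R :=
  RR pa pb pg pd pt ((List.finRange N).map mu)

open Classical in
/-- The total weighted jump rate (without the normalization `1/(N+1)`) from state `μ` to
state `ν` in the two-species open boundary ASEP. -/
def jump (pa pb pg pd pt : K) (N : ℕ) (mu nu : Fin N → ℤ) : K :=
  (∑ u : Fin N,
    if h : (u : ℕ) + 1 < N then
      ((if nu = mu ∘ Equiv.swap u ⟨(u : ℕ) + 1, h⟩ ∧
            ((mu u, mu ⟨(u : ℕ) + 1, h⟩) = (1, -1) ∨ (mu u, mu ⟨(u : ℕ) + 1, h⟩) = (1, 0) ∨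
              (mu u, mu ⟨(u : ℕ) + 1, h⟩) = (0, -1)) then pt else 0) +
        (if nu = mu ∘ Equiv.swap u ⟨(u : ℕ) + 1, h⟩ ∧
            ((mu u, mu ⟨(u : ℕ) + 1, h⟩) = (-1, 1) ∨ (mu u, mu ⟨(u : ℕ) + 1, h⟩) = (0, 1) ∨
              (mu u, mu ⟨(u : ℕ) + 1, h⟩) = (-1, 0)) then 1 else 0))
    else 0) +
  (if hN : 0 < N then
      ((if mu ⟨0, hN⟩ = -1 ∧ nu = Function.update mu ⟨0, hN⟩ 1 then pa else 0) +
        (if mu ⟨0, hN⟩ = 1 ∧ nu = Function.update mu ⟨0, hN⟩ (-1) then pg else 0) +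
        (if mu ⟨N - 1, by omega⟩ = 1 ∧ nu = Function.update mu ⟨N - 1, by omega⟩ (-1) then pb
          else 0) +
        (if mu ⟨N - 1, by omega⟩ = -1 ∧ nu = Function.update mu ⟨N - 1, by omega⟩ 1 then pd
          else 0))
    else 0)

open Classical in
/-- The one-step transition matrix of the two-species open boundary ASEP on the set of states
with exactly `r` zeros: off-diagonal entries are the jump rates divided by `N+1`, and the
diagonal entry is the complementary probability. -/
def Pmat (pa pb pg pd pt : K) (N r : ℕ) (mu nu : Fin N → ℤ) : K :=
  jump pa pb pg pd pt N mu nu / (N + 1) +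
    (if nu = mu then 1 - (∑ x ∈ WordsF N r, jump pa pb pg pd pt N mu x) / (N + 1) else 0)

/-- A list as a word-function (entries beyond the length are `0`). -/
def funOf (N : ℕ) (w : List ℤ) : Fin N → ℤ := fun k => w.getD (k : ℕ) 0


section Aux

open Finset List

lemma countP_eq_sum_map' {A : Type*} (p : A → Prop) [DecidablePred p] (l : List A) :
    l.countP (fun a => decide (p a)) = (l.map (fun a => if p a then 1 else 0)).sum := by
  induction l with
  | nil => simp
  | cons a l ih => by_cases h : p a <;> simp [List.countP_cons, h, ih] <;> omega

lemma filter_finRange_eq {N : ℕ} (S : Finset (Fin N)) {m : ℕ} (h : Sᶜ.card = m) :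
    ((List.finRange N).filter (fun k => decide (k ∉ S))) =
      (List.finRange m).map (fun j => Sᶜ.orderEmbOfFin h j) := by
  apply (fun hp h1 h2 => List.Perm.eq_of_pairwise' (r := (· ≤ ·)) h1 h2 hp)
    (List.perm_of_nodup_nodup_toFinset_eq ?_ ?_ ?_) ?_ ?_
  · exact (List.nodup_finRange N).filter _
  · exact (List.nodup_finRange m).map (Sᶜ.orderEmbOfFin h).injective
  · ext x
    simp only [List.mem_toFinset, List.mem_filter, List.mem_finRange, true_and,
      List.mem_map, decide_eq_true_eq]
    constructor
    · intro hx
      have hx' : (x : Fin N) ∈ (↑(Sᶜ) : Set (Fin N)) :=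
        Finset.mem_coe.mpr (Finset.mem_compl.mpr hx)
      rw [← Finset.range_orderEmbOfFin Sᶜ h] at hx'
      exact hx'
    · rintro ⟨j, rfl⟩
      exact Finset.mem_compl.mp (Finset.orderEmbOfFin_mem Sᶜ h j)
  · exact ((List.pairwise_lt_finRange N).filter _).imp le_of_lt
  · refine (List.pairwise_map.mpr ?_).imp le_of_lt
    exact (List.pairwise_lt_finRange m).imp (fun hab => (Sᶜ.orderEmbOfFin h).strictMono hab)

lemma nzeros_map {m : ℕ} (s : Fin m → ℤ) :
    nzeros ((List.finRange m).map s) = (Finset.univ.filter fun j => s j = 0).card := by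
  rw [nzeros, List.count_eq_countP, List.countP_map, Finset.card_filter, Fin.sum_univ_def,
    show ((fun x => x == 0) ∘ s) = (fun a => decide (s a = 0)) from rfl, countP_eq_sum_map']

lemma mem_WordsF_iff {N r : ℕ} {mu : Fin N → ℤ} :
    mu ∈ WordsF N r ↔ (∀ i, mu i = -1 ∨ mu i = 0 ∨ mu i = 1) ∧
      (Finset.univ.filter fun k => mu k = 0).card = r := by
  rw [WordsF, Finset.mem_filter, Finset.mem_image]
  constructor
  · rintro ⟨⟨g, -, rfl⟩, h2⟩
    refine ⟨fun i => ?_, h2⟩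
    beta_reduce
    have := (g i).2
    omega
  · rintro ⟨h1, h2⟩
    refine ⟨⟨fun i => ⟨(mu i + 1).toNat, by rcases h1 i with h | h | h <;> simp [h]⟩,
      Finset.mem_univ _, ?_⟩, h2⟩
    funext i
    rcases h1 i with h | h | h <;> simp [h]

lemma WordsF_eq_empty {m r : ℕ} (h : m < r) : WordsF m r = ∅ := by
  rw [Finset.eq_empty_iff_forall_notMem]
  intro mu hmu
  have h2 := (mem_WordsF_iff.mp hmu).2
  have := Finset.card_filter_le (Finset.univ : Finset (Fin m)) (fun k => mu k = 0)
  simp only [Finset.card_univ, Fintype.card_fin] at this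
  omega

lemma wordOf_eq {N : ℕ} (S : Finset (Fin N)) {m : ℕ} (h : Sᶜ.card = m) (mu : Fin N → ℤ) :
    wordOf N mu S = (List.finRange m).map (fun j => mu (Sᶜ.orderEmbOfFin h j)) := by
  rw [wordOf, filter_finRange_eq S h, List.map_map]
  rfl

lemma card_zero_comp {N m : ℕ} (S : Finset (Fin N)) (h : Sᶜ.card = m) (mu : Fin N → ℤ)
    (hS : ∀ i ∈ S, mu i ≠ 0) :
    (Finset.univ.filter fun j : Fin m => mu (Sᶜ.orderEmbOfFin h j) = 0).card
      = (Finset.univ.filter fun i => mu i = 0).card := by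
  apply Finset.card_bij (fun j _ => Sᶜ.orderEmbOfFin h j)
  · intro j hj
    simp only [Finset.mem_filter, Finset.mem_univ, true_and] at hj ⊢
    exact hj
  · intro a _ b _ hab
    exact (Sᶜ.orderEmbOfFin h).injective hab
  · intro i hi
    simp only [Finset.mem_filter, Finset.mem_univ, true_and] at hi
    have hic : (i : Fin N) ∈ (↑(Sᶜ) : Set (Fin N)) :=
      Finset.mem_coe.mpr (Finset.mem_compl.mpr (fun hiS => hS i hiS hi))
    rw [← Finset.range_orderEmbOfFin Sᶜ h] at hic
    obtain ⟨j, hj⟩ := hic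
    exact ⟨j, by simp [Finset.mem_filter, hj, hi], hj⟩

variable {K : Type*} [Field K]

lemma Rt_wordOf {N m r : ℕ} (pa pb pg pd pt : K) (S : Finset (Fin N)) (h : Sᶜ.card = m)
    (mu : Fin N → ℤ) (hmu : mu ∈ WordsF N r) (hS : ∀ i ∈ S, mu i ≠ 0) :
    Rt pa pb pg pd pt (wordOf N mu S) =
      ((pt - 1) ^ (m - r) /
          ∏ i ∈ Finset.Ico (2 * r) (m + r), (pa * pb * pt ^ i - pg * pd)) *
        RRw pa pb pg pd pt m (fun j => mu (Sᶜ.orderEmbOfFin h j)) := by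
  have hz : nzeros ((List.finRange m).map fun j => mu (Sᶜ.orderEmbOfFin h j)) = r := by
    rw [nzeros_map, card_zero_comp S h mu hS, (mem_WordsF_iff.mp hmu).2]
  rw [wordOf_eq S h mu, Rt, hz, List.length_map, List.length_finRange, RRw]

lemma fiber_sum {N : ℕ} (pa pb pg pd pt : K) (r : ℕ) (S T : Finset (Fin N)) (hT : T ⊆ S) :
    ∑ mu ∈ (WordsF N r).filter
        (fun mu => (∀ i ∈ S, mu i ≠ 0) ∧ S.filter (fun i => mu i = 1) = T),
        Rt pa pb pg pd pt (wordOf N mu S)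
      = ((pt - 1) ^ (N - S.card - r) /
            ∏ i ∈ Finset.Ico (2 * r) (N - S.card + r), (pa * pb * pt ^ i - pg * pd)) *
          ∑ s ∈ WordsF (N - S.card) r, RRw pa pb pg pd pt (N - S.card) s := by
  have h : Sᶜ.card = N - S.card := by rw [Finset.card_compl, Fintype.card_fin]
  have hre : ∀ (s : Fin (N - S.card) → ℤ) (j : Fin (N - S.card)),
      (if hi : (Sᶜ.orderEmbOfFin h) j ∈ Sᶜ then
          s ((Sᶜ.orderIsoOfFin h).symm ⟨(Sᶜ.orderEmbOfFin h) j, hi⟩)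
        else if (Sᶜ.orderEmbOfFin h) j ∈ T then 1 else -1) = s j := by
    intro s j
    have hmem : (Sᶜ.orderEmbOfFin h) j ∈ Sᶜ := Finset.orderEmbOfFin_mem _ h j
    simp only [dif_pos hmem]
    congr 1
    rw [show (⟨(Sᶜ.orderEmbOfFin h) j, hmem⟩ : {x // x ∈ Sᶜ}) = (Sᶜ.orderIsoOfFin h) j from
      Subtype.ext (Finset.coe_orderIsoOfFin_apply Sᶜ h j).symm, OrderIso.symm_apply_apply]
  have hsymm : ∀ j : Fin (N - S.card),
      (Sᶜ.orderIsoOfFin h).symm ⟨(Sᶜ.orderEmbOfFin h) j, Finset.orderEmbOfFin_mem Sᶜ h j⟩ = j := by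
    intro j
    rw [show (⟨(Sᶜ.orderEmbOfFin h) j, Finset.orderEmbOfFin_mem Sᶜ h j⟩ : {x // x ∈ Sᶜ}) =
      (Sᶜ.orderIsoOfFin h) j from Subtype.ext (Finset.coe_orderIsoOfFin_apply Sᶜ h j).symm,
      OrderIso.symm_apply_apply]
  have hes : ∀ x : {y // y ∈ Sᶜ}, (Sᶜ.orderEmbOfFin h) ((Sᶜ.orderIsoOfFin h).symm x) = ↑x := by
    intro x
    rw [← Finset.coe_orderIsoOfFin_apply, OrderIso.apply_symm_apply]
  rw [Finset.mul_sum]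
  refine Finset.sum_nbij' (i := fun mu => fun j => mu ((Sᶜ.orderEmbOfFin h) j))
    (j := fun s => fun i : Fin N => if hi : i ∈ Sᶜ then s ((Sᶜ.orderIsoOfFin h).symm ⟨i, hi⟩)
      else if i ∈ T then 1 else -1) ?_ ?_ ?_ ?_ ?_
  · intro mu hmu
    rw [Finset.mem_filter] at hmu
    obtain ⟨hw, hS, -⟩ := hmu
    rw [mem_WordsF_iff] at hw ⊢
    exact ⟨fun j => hw.1 _, by rw [card_zero_comp S h mu hS, hw.2]⟩
  · intro s hs
    have hvals := (mem_WordsF_iff.mp hs).1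
    have hSne : ∀ i ∈ S, (if hi : i ∈ Sᶜ then s ((Sᶜ.orderIsoOfFin h).symm ⟨i, hi⟩)
        else if i ∈ T then (1 : ℤ) else -1) ≠ 0 := by
      intro i hi
      rw [dif_neg (by simp [Finset.mem_compl, hi])]
      split_ifs <;> omega
    rw [Finset.mem_filter]
    refine ⟨?_, hSne, ?_⟩
    · rw [mem_WordsF_iff]
      constructor
      · intro i
        by_cases hi : i ∈ Sᶜ
        · simp only [dif_pos hi]
          exact hvals _
        · simp only [dif_neg hi]
          split_ifs <;> omega
      · refine Eq.trans (Eq.trans (card_zero_comp S h _ hSne).symm ?_)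
          (mem_WordsF_iff.mp hs).2
        refine congrArg Finset.card (Finset.filter_congr fun j _ => ?_)
        simp [hre, hsymm]
    · ext i
      simp only [Finset.mem_filter]
      constructor
      · rintro ⟨hiS, hv⟩
        rw [dif_neg (by simp [Finset.mem_compl, hiS])] at hv
        by_contra hiT
        rw [if_neg hiT] at hv
        omega
      · intro hiT
        refine ⟨hT hiT, ?_⟩
        rw [dif_neg (by simp [Finset.mem_compl, hT hiT]), if_pos hiT]
  · intro mu hmu
    rw [Finset.mem_filter] at hmu
    obtain ⟨hw, hS, hTeq⟩ := hmu
    funext i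
    by_cases hi : i ∈ Sᶜ
    · simp only [dif_pos hi]
      rw [hes ⟨i, hi⟩]
    · have hiS : i ∈ S := by simpa [Finset.mem_compl] using hi
      simp only [dif_neg hi]
      by_cases hiT : i ∈ T
      · rw [if_pos hiT]
        rw [← hTeq] at hiT
        exact (Finset.mem_filter.mp hiT).2.symm
      · rw [if_neg hiT]
        have h1 : mu i ≠ 1 := fun hc => hiT (hTeq ▸ Finset.mem_filter.mpr ⟨hiS, hc⟩)
        have h0 : mu i ≠ 0 := hS i hiS
        rcases (mem_WordsF_iff.mp hw).1 i with hv | hv | hv <;> omega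
  · intro s _
    funext j
    exact hre s j
  · intro mu hmu
    rw [Finset.mem_filter] at hmu
    exact Rt_wordOf pa pb pg pd pt S h mu hmu.1 hmu.2.1

lemma CC_zero {N : ℕ} : (CC 0 : Lp K N) = 0 := AddMonoidAlgebra.single_zero 0

lemma CC_sum {N : ℕ} {A : Type*} (s : Finset A) (f : A → K) :
    (CC (∑ x ∈ s, f x) : Lp K N) = ∑ x ∈ s, CC (f x) :=
  by
  classical
  induction s using Finset.induction_on with
  | empty => simp [CC, AddMonoidAlgebra.single_zero]
  | insert a s ha ih =>
    rw [Finset.sum_insert ha, Finset.sum_insert ha, ← ih]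
    exact AddMonoidAlgebra.single_add _ _ _

lemma stepA {N : ℕ} (pa pb pg pd pt : K) (r : ℕ) (S : Finset (Fin N)) :
    ∑ mu ∈ WordsF N r,
        (if ∀ i ∈ S, mu i ≠ 0 then
          CC (Rt pa pb pg pd pt (wordOf N mu S)) *
            ∏ i ∈ S, (AddMonoidAlgebra.single (Pi.single i (mu i)) (1 : K) - 1)
        else 0)
      = CC (((pt - 1) ^ (N - S.card - r) /
              ∏ i ∈ Finset.Ico (2 * r) (N - S.card + r), (pa * pb * pt ^ i - pg * pd)) *
            ∑ s ∈ WordsF (N - S.card) r, RRw pa pb pg pd pt (N - S.card) s) *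
          ∏ i ∈ S, (Z i + Zinv i - (2 : Lp K N)) := by
  rw [← Finset.sum_filter, ← Finset.sum_fiberwise_of_maps_to
      (g := fun mu : Fin N → ℤ => S.filter fun i => mu i = 1) (t := S.powerset)
      (fun mu _ => Finset.mem_powerset.mpr (Finset.filter_subset _ _))]
  have step : ∀ T ∈ S.powerset,
      (∑ mu ∈ ((WordsF N r).filter fun mu => ∀ i ∈ S, mu i ≠ 0).filter
          (fun mu => S.filter (fun i => mu i = 1) = T),
        CC (Rt pa pb pg pd pt (wordOf N mu S)) *
          ∏ i ∈ S, (AddMonoidAlgebra.single (Pi.single i (mu i)) (1 : K) - 1))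
      = CC (((pt - 1) ^ (N - S.card - r) /
              ∏ i ∈ Finset.Ico (2 * r) (N - S.card + r), (pa * pb * pt ^ i - pg * pd)) *
            ∑ s ∈ WordsF (N - S.card) r, RRw pa pb pg pd pt (N - S.card) s) *
          ((∏ i ∈ T, (Z i - (1 : Lp K N))) * ∏ i ∈ S \ T, (Zinv i - 1)) := by
    intro T hTp
    have hTS : T ⊆ S := Finset.mem_powerset.mp hTp
    rw [Finset.filter_filter]
    have hprod : ∀ mu ∈ (WordsF N r).filter
        (fun mu => (∀ i ∈ S, mu i ≠ 0) ∧ S.filter (fun i => mu i = 1) = T),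
        (∏ i ∈ S, (AddMonoidAlgebra.single (Pi.single i (mu i)) (1 : K) - 1))
          = (∏ i ∈ T, (Z i - (1 : Lp K N))) * ∏ i ∈ S \ T, (Zinv i - 1) := by
      intro mu hmu
      rw [Finset.mem_filter] at hmu
      obtain ⟨hw, hne, hfT⟩ := hmu
      rw [← Finset.prod_sdiff hTS, mul_comm]
      congr 1
      · refine Finset.prod_congr rfl fun i hi => ?_
        have h1 : mu i = 1 := by
          rw [← hfT] at hi
          exact (Finset.mem_filter.mp hi).2
        rw [h1]
        rfl
      · refine Finset.prod_congr rfl fun i hi => ?_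
        obtain ⟨hiS, hiT⟩ := Finset.mem_sdiff.mp hi
        have h1 : mu i ≠ 1 := fun hc => hiT (hfT ▸ Finset.mem_filter.mpr ⟨hiS, hc⟩)
        have h0 : mu i ≠ 0 := hne i hiS
        have hm : mu i = -1 := by rcases (mem_WordsF_iff.mp hw).1 i with hv | hv | hv <;> omega
        rw [hm]
        rfl
    rw [Finset.sum_congr rfl fun mu hmu => by rw [hprod mu hmu], ← Finset.sum_mul,
      ← CC_sum, fiber_sum pa pb pg pd pt r S T hTS]
  rw [Finset.sum_congr rfl step, ← Finset.mul_sum, ← Finset.prod_add]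
  congr 1
  exact Finset.prod_congr rfl fun i _ => by ring

end Aux

end RST

namespace RST

/-- Let `0 ≤ r ≤ N`.  The sum of the open boundary ASEP polynomials `F_μ`
over all words `μ ∈ {-1,0,1}^N` with exactly `r` zeros (i.e. the Koornwinder polynomial
`K_{(1^{N-r},0^r)}` under the standard change of variables) equals
`∑_{k=0}^{N-r} Z̃_{N-k,r} e_k(y₁,…,y_N)` where `y_i = z_i + z_i⁻¹ - 2`,
`Z̃_{m,r} = ((t-1)^{m-r}/∏_{i=2r}^{m+r-1}(αβt^i - γδ)) ∑_{σ} R(σ)` and the last sum is over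
all words `σ ∈ {-1,0,1}^m` with exactly `r` zeros. -/
theorem statement18 (N r : ℕ) (hr : r ≤ N) :
    ∑ mu ∈ WordsF N r, FF vA vB vG vD vT N mu =
      ∑ k ∈ Finset.range (N - r + 1),
        CC (((vT - 1) ^ (N - k - r) /
              ∏ i ∈ Finset.Ico (2 * r) (N - k + r), (vA * vB * vT ^ i - vG * vD)) *
            ∑ s ∈ WordsF (N - k) r, RRw vA vB vG vD vT (N - k) s) *
          ∑ S ∈ Finset.powersetCard k (Finset.univ : Finset (Fin N)),
            ∏ i ∈ S, (Z i + Zinv i - (2 : Lp K5 N)) := by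
  have hps : ∀ mu : Fin N → ℤ, (Finset.univ.filter fun k => mu k ≠ 0).powerset
      = (Finset.univ : Finset (Fin N)).powerset.filter (fun S => ∀ i ∈ S, mu i ≠ 0) := by
    intro mu
    ext S
    rw [Finset.mem_powerset, Finset.mem_filter, Finset.mem_powerset]
    constructor
    · intro hS
      exact ⟨Finset.subset_univ S, fun i hi => (Finset.mem_filter.mp (hS hi)).2⟩
    · rintro ⟨-, h2⟩ i hi
      exact Finset.mem_filter.mpr ⟨Finset.mem_univ i, h2 i hi⟩
  have hFF : ∀ mu : Fin N → ℤ, FF vA vB vG vD vT N mu =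
      ∑ S ∈ (Finset.univ : Finset (Fin N)).powerset,
        (if ∀ i ∈ S, mu i ≠ 0 then
          CC (Rt vA vB vG vD vT (wordOf N mu S)) *
            ∏ i ∈ S, (AddMonoidAlgebra.single (Pi.single i (mu i)) (1 : K5) - 1)
         else 0) := by
    intro mu
    rw [FF, hps mu, Finset.sum_filter]
  rw [Finset.sum_congr rfl fun mu _ => hFF mu, Finset.sum_comm,
    Finset.sum_congr rfl fun S _ => stepA vA vB vG vD vT r S, Finset.sum_powerset,
    Finset.card_univ, Fintype.card_fin]
  have hin : ∀ k ∈ Finset.range (N + 1),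
      (∑ S ∈ Finset.powersetCard k (Finset.univ : Finset (Fin N)),
        CC (((vT - 1) ^ (N - S.card - r) /
              ∏ i ∈ Finset.Ico (2 * r) (N - S.card + r), (vA * vB * vT ^ i - vG * vD)) *
            ∑ s ∈ WordsF (N - S.card) r, RRw vA vB vG vD vT (N - S.card) s) *
          ∏ i ∈ S, (Z i + Zinv i - (2 : Lp K5 N)))
      = CC (((vT - 1) ^ (N - k - r) /
              ∏ i ∈ Finset.Ico (2 * r) (N - k + r), (vA * vB * vT ^ i - vG * vD)) *
            ∑ s ∈ WordsF (N - k) r, RRw vA vB vG vD vT (N - k) s) *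
          ∑ S ∈ Finset.powersetCard k (Finset.univ : Finset (Fin N)),
            ∏ i ∈ S, (Z i + Zinv i - (2 : Lp K5 N)) := by
    intro k _
    rw [Finset.mul_sum]
    refine Finset.sum_congr rfl fun S hS => ?_
    rw [(Finset.mem_powersetCard.mp hS).2]
  rw [Finset.sum_congr rfl hin]
  refine (Finset.sum_subset (fun k hk => Finset.mem_range.mpr ?_) fun k hk1 hk2 => ?_).symm
  · have := Finset.mem_range.mp hk
    omega
  · have hk : N - k < r := by
      have h1 := Finset.mem_range.mp hk1
      rw [Finset.mem_range] at hk2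
      omega
    rw [WordsF_eq_empty hk, Finset.sum_empty, mul_zero, CC_zero, zero_mul]

end RST
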